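/- arXiv:1407.1763 — 2 statements merged into one kernel-verified Lean document; each statement's English description precedes it below -/
import Mathlib

section
/- Let F be holomorphic on Δ⁺ with a continuous extension to Δ⁺ ∪ γ, and suppose there exists a constant C > 0 such that |Im F(t)| ≤ C·|Re F(t)| for every t ∈ γ. If F vanishes to infinite order at 0, then either F is identically zero on Δ⁺, or there exists a sequence (p_j) of points of Δ⁺ with p_j → 0, Re F(p_j) ≠ 0 for every j, and the sequence |Im F(p_j)| / |Re F(p_j)| is unbounded. -/
open Complex Metric ComplexConjugate Filter

/-- The open upper half disc `Δ⁺ = {ζ ∈ ℂ : |ζ| < 1, Im ζ > 0}`. -/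
def upperHalfDisc : Set ℂ := {z : ℂ | ‖z‖ < 1 ∧ 0 < z.im}

/-- The interval `γ = (-1,1)` viewed as a subset of the real axis in `ℂ`. -/
def realSegment : Set ℂ := {z : ℂ | z.im = 0 ∧ -1 < z.re ∧ z.re < 1}

/-- Herglotz-type growth bound: a holomorphic function with positive real part on a disc. -/
lemma herglotz_bound {S : ℂ → ℂ} {c : ℂ} {r : ℝ}
    (hd : DifferentiableOn ℂ S (ball c r))
    (hpos : ∀ z ∈ ball c r, 0 < (S z).re)
    {z : ℂ} (hz : z ∈ ball c r) :
    ‖S z‖ * (r - dist z c) ≤ 2 * ‖S c‖ * r := by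
  have hr : 0 < r := pos_of_mem_ball hz
  have hcball : c ∈ ball c r := mem_ball_self hr
  set a := S c with ha
  have hapos : 0 < a.re := hpos c hcball
  set V : ℂ → ℂ := fun w => (S w - a) / (S w + conj a) with hV
  have hden : ∀ w ∈ ball c r, S w + conj a ≠ 0 := by
    intro w hw h0
    have h1 : (S w + conj a).re = 0 := by rw [h0]; rfl
    rw [Complex.add_re, Complex.conj_re] at h1
    have := hpos w hw
    linarith
  have hlt : ∀ w ∈ ball c r, ‖S w - a‖ < ‖S w + conj a‖ := by
    intro w hw
    have h1 : normSq (S w - a) < normSq (S w + conj a) := by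
      rw [normSq_sub, normSq_add]
      have h2 : (S w * conj (conj a)).re = (S w).re * a.re - (S w).im * a.im := by
        simp [Complex.mul_re]
      have h3 : (S w * conj a).re = (S w).re * a.re + (S w).im * a.im := by
        simp [Complex.mul_re]
      have h4 : normSq (conj a) = normSq a := normSq_conj a
      have h5 := hpos w hw
      rw [h2, h3, h4]
      nlinarith
    have := Real.sqrt_lt_sqrt (normSq_nonneg _) h1
    simpa [Complex.norm_def] using this
  have hVc : V c = 0 := by simp [hV, ha]
  have habs : ∀ w ∈ ball c r, ‖V w‖ < 1 := by
    intro w hw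
    have hpo : 0 < ‖S w + conj a‖ :=
      (norm_pos_iff.mpr (hden w hw))
    rw [hV]
    simp only [norm_div]
    rw [div_lt_one hpo]
    exact hlt w hw
  have hVmaps : Set.MapsTo V (ball c r) (ball (V c) 1) := by
    intro w hw
    rw [hVc, mem_ball, dist_zero_right]
    exact habs w hw
  have hVd : DifferentiableOn ℂ V (ball c r) :=
    (hd.sub (differentiableOn_const a)).div
      (hd.add (differentiableOn_const (conj a))) hden
  have hSchwarz := Complex.dist_le_div_mul_dist_of_mapsTo_ball hVd (hVmaps.mono_right ball_subset_closedBall) hz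
  rw [hVc, dist_zero_right] at hSchwarz
  have hVz : ‖V z‖ ≤ dist z c / r := by
    rw [div_eq_inv_mul]; simpa using hSchwarz
  have hsolve : S z * (1 - V z) = a + conj a * V z := by
    have h0 := hden z hz
    simp only [hV]
    field_simp
    ring
  have h1V : ‖1 - V z‖ ≥ (r - dist z c) / r := by
    have h2 : ‖1 - V z‖ ≥ 1 - ‖V z‖ := by
      have h0 := abs_norm_sub_norm_le 1 (V z)
      have h1 : ‖(1:ℂ)‖ - ‖V z‖ ≤ ‖1 - V z‖ :=
        le_trans (le_abs_self _) h0
      simpa using h1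
    have h3 : 1 - ‖V z‖ ≥ 1 - dist z c / r := by linarith [hVz]
    have h4 : (1 : ℝ) - dist z c / r = (r - dist z c) / r := by field_simp
    linarith [h4 ▸ h3]
  have haV : ‖a + conj a * V z‖ ≤ 2 * ‖a‖ := by
    calc ‖a + conj a * V z‖ ≤ ‖a‖ + ‖conj a * V z‖ :=
          norm_add_le _ _
    _ = ‖a‖ + ‖a‖ * ‖V z‖ := by
          rw [norm_mul, Complex.norm_conj]
    _ ≤ ‖a‖ + ‖a‖ * 1 := by
          have := (habs z hz).le
          nlinarith [norm_nonneg a, norm_nonneg (V z)]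
    _ = 2 * ‖a‖ := by ring
  have hdz : dist z c < r := mem_ball.mp hz
  have key : ‖S z‖ * ‖1 - V z‖ ≤ 2 * ‖a‖ := by
    rw [← norm_mul, hsolve]; exact haV
  have h5 : ‖S z‖ * ((r - dist z c) / r) ≤ ‖S z‖ * ‖1 - V z‖ :=
    mul_le_mul_of_nonneg_left h1V (norm_nonneg _)
  have h6 : ‖S z‖ * ((r - dist z c) / r) ≤ 2 * ‖a‖ := le_trans h5 key
  calc ‖S z‖ * (r - dist z c)
      = (‖S z‖ * ((r - dist z c) / r)) * r := by field_simp
    _ ≤ (2 * ‖a‖) * r := mul_le_mul_of_nonneg_right h6 hr.le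
    _ = 2 * ‖S c‖ * r := by rw [ha]

lemma isOpen_upperHalfDisc : IsOpen upperHalfDisc := by
  have h1 : IsOpen {z : ℂ | ‖z‖ < 1} :=
    isOpen_lt (continuous_norm) continuous_const
  have h2 : IsOpen {z : ℂ | 0 < z.im} := isOpen_lt continuous_const Complex.continuous_im
  exact h1.inter h2

lemma isPreconnected_upperHalfDisc : IsPreconnected upperHalfDisc := by
  have h : Convex ℝ upperHalfDisc := by
    have h1 : upperHalfDisc = Metric.ball (0:ℂ) 1 ∩ {z : ℂ | 0 < z.im} := by
      ext z
      simp [upperHalfDisc, Metric.mem_ball, Complex.dist_eq]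
    rw [h1]
    exact (convex_ball 0 1).inter (convex_halfSpace_im_gt 0)
  exact h.isPreconnected

lemma abs_I_mul_real (y : ℝ) : ‖Complex.I * y‖ = |y| := by
  rw [norm_mul, Complex.norm_I, Complex.norm_real, Real.norm_eq_abs, one_mul]

lemma im_I_mul_real (y : ℝ) : (Complex.I * y).im = y := by
  simp

lemma mem_uhd_I_mul {y : ℝ} (h0 : 0 < y) (h1 : y < 1) :
    Complex.I * y ∈ upperHalfDisc := by
  constructor
  · rw [abs_I_mul_real, abs_of_pos h0]; exact h1
  · rw [im_I_mul_real]; exact h0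

set_option maxHeartbeats 4000000 in
/-- **Main result (Proposition 2.1).**
If `F` is holomorphic on `Δ⁺`, continuous on `Δ⁺ ∪ γ`, maps `γ` into the cone
`{|Im z| ≤ C|Re z|}` for some `C > 0`, and vanishes to infinite order at `0`,
then either `F ≡ 0` on `Δ⁺`, or there is a sequence in `Δ⁺` tending to `0` on which
`Re F ≠ 0` and `|Im F| / |Re F|` is unbounded. -/
theorem main_result
    (F : ℂ → ℂ)
    (hF_hol : DifferentiableOn ℂ F upperHalfDisc)
    (hF_cont : ContinuousOn F (upperHalfDisc ∪ realSegment))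
    (C : ℝ) (hC : 0 < C)
    (hcone : ∀ t ∈ realSegment, |(F t).im| ≤ C * |(F t).re|)
    (hvanish : ∀ k : ℕ, ∃ Ck > (0 : ℝ), ∃ δ > (0 : ℝ),
      ∀ z ∈ upperHalfDisc, ‖z‖ < δ →
        ‖F z‖ ≤ Ck * ‖z‖ ^ k) :
    (∀ z ∈ upperHalfDisc, F z = 0) ∨
    (∃ p : ℕ → ℂ,
      (∀ j, p j ∈ upperHalfDisc) ∧
      Filter.Tendsto p Filter.atTop (nhds 0) ∧
      (∀ j, (F (p j)).re ≠ 0) ∧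
      (∀ M : ℝ, ∃ j, M < |(F (p j)).im| / |(F (p j)).re|)) := by
  by_cases hzero : ∀ z ∈ upperHalfDisc, F z = 0
  · exact Or.inl hzero
  right
  push_neg at hzero
  obtain ⟨z₁, hz₁mem, hz₁⟩ := hzero
  by_contra h2
  have hopen := isOpen_upperHalfDisc
  have hanal : AnalyticOnNhd ℂ F upperHalfDisc := hF_hol.analyticOnNhd hopen
  have hpre := isPreconnected_upperHalfDisc
  -- Claim A: a uniform cone bound near 0 where Re F ≠ 0
  by_cases hA : ∃ δ M : ℝ, 0 < δ ∧ δ ≤ 1 ∧ 0 < M ∧ ∀ z ∈ upperHalfDisc,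
      ‖z‖ < δ → (F z).re ≠ 0 → |(F z).im| ≤ M * |(F z).re|
  swap
  · -- build the sequence, contradicting h2
    push_neg at hA
    have hex : ∀ j : ℕ, ∃ z, z ∈ upperHalfDisc ∧ ‖z‖ < 1/((j:ℝ)+1) ∧
        (F z).re ≠ 0 ∧ ((j:ℝ)+1) * |(F z).re| < |(F z).im| := by
      intro j
      have hj1 : (0:ℝ) < (j:ℝ) + 1 := by positivity
      obtain ⟨z, hz, h1, h2', h3⟩ := hA (1/((j:ℝ)+1)) ((j:ℝ)+1) (by positivity)
        (by rw [div_le_one hj1]; linarith [Nat.cast_nonneg (α := ℝ) j]) hj1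
      exact ⟨z, hz, h1, h2', h3⟩
    choose p hp using hex
    refine h2 ⟨p, fun j => (hp j).1, ?_, fun j => (hp j).2.2.1, ?_⟩
    · rw [tendsto_zero_iff_norm_tendsto_zero]
      apply squeeze_zero (fun j => norm_nonneg _) (fun j => ?_)
        tendsto_one_div_add_atTop_nhds_zero_nat
      exact le_of_lt (by simpa using (hp j).2.1)
    · intro M₀
      refine ⟨Nat.ceil (max M₀ 0), ?_⟩
      set j := Nat.ceil (max M₀ 0)
      have h1 := (hp j).2.2.2
      have hre : 0 < |(F (p j)).re| := abs_pos.mpr (hp j).2.2.1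
      rw [lt_div_iff₀ hre]
      have hMj : M₀ ≤ (j:ℝ) := le_trans (le_max_left _ _) (Nat.le_ceil _)
      nlinarith
  obtain ⟨δ, M, hδ, hδ1, hM, hbound⟩ := hA
  -- Claim B: Re F = 0 forces Im F = 0 near the origin
  have hslit0 : ∀ z ∈ upperHalfDisc, ‖z‖ < δ → (F z).re = 0 → (F z).im = 0 := by
    intro z hzmem hzδ hre
    by_contra him
    rcases (hanal z hzmem).eventually_constant_or_nhds_le_map_nhds with hconst | hmap
    · -- locally constant case
      have hEq : Set.EqOn (fun w => F w - F z) 0 upperHalfDisc := by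
        apply AnalyticOnNhd.eqOn_zero_of_preconnected_of_frequently_eq_zero
          (hanal.sub analyticOnNhd_const) hpre hzmem
        have hev : ∀ᶠ w in nhds z, F w - F z = 0 :=
          hconst.mono (fun w hw => by rw [hw]; ring)
        exact (hev.filter_mono nhdsWithin_le_nhds).frequently
      obtain ⟨C₁, hC₁, δ₁, hδ₁, hv⟩ := hvanish 1
      have hFz0 : F z ≠ 0 := fun h => him (by rw [h]; rfl)
      have hFz : 0 < ‖F z‖ := norm_pos_iff.mpr hFz0
      set t := min (min δ₁ 1) (‖F z‖ / C₁) / 2 with ht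
      have ht0 : 0 < t := by
        have : 0 < min (min δ₁ 1) (‖F z‖ / C₁) := by positivity
        positivity
      have ht1 : t < 1 := by
        have h1 : min (min δ₁ 1) (‖F z‖ / C₁) ≤ 1 :=
          le_trans (min_le_left _ _) (min_le_right _ _)
        rw [ht]; linarith
      have htδ : t < δ₁ := by
        have h1 : min (min δ₁ 1) (‖F z‖ / C₁) ≤ δ₁ :=
          le_trans (min_le_left _ _) (min_le_left _ _)
        rw [ht]; linarith
      have htmem : Complex.I * t ∈ upperHalfDisc := mem_uhd_I_mul ht0 ht1
      have habs_t : ‖Complex.I * t‖ = t := by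
        rw [abs_I_mul_real, abs_of_pos ht0]
      have h1 := hv (Complex.I * t) htmem (by rw [habs_t]; exact htδ)
      have h2 : F (Complex.I * t) = F z := by
        have := hEq htmem
        simpa [sub_eq_zero] using this
      rw [h2, habs_t, pow_one] at h1
      have h3 : C₁ * t ≤ ‖F z‖ / 2 := by
        have hle : t ≤ (‖F z‖ / C₁) / 2 := by
          rw [ht]
          have := min_le_right (min δ₁ 1) (‖F z‖ / C₁)
          linarith
        calc C₁ * t ≤ C₁ * ((‖F z‖ / C₁) / 2) :=
              mul_le_mul_of_nonneg_left hle hC₁.le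
        _ = ‖F z‖ / 2 := by field_simp
      linarith
    · -- open mapping case
      have hUopen : IsOpen (upperHalfDisc ∩ {w : ℂ | ‖w‖ < δ}) :=
        hopen.inter (isOpen_lt continuous_norm continuous_const)
      have hUnhd : upperHalfDisc ∩ {w : ℂ | ‖w‖ < δ} ∈ nhds z :=
        hUopen.mem_nhds ⟨hzmem, hzδ⟩
      have himg : F '' (upperHalfDisc ∩ {w : ℂ | ‖w‖ < δ}) ∈ nhds (F z) := by
        apply hmap
        rw [Filter.mem_map]
        exact Filter.mem_of_superset hUnhd (fun w hw => ⟨w, hw, rfl⟩)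
      obtain ⟨ρ, hρ, hball⟩ := Metric.mem_nhds_iff.mp himg
      have himabs : 0 < |(F z).im| := abs_pos.mpr him
      set σ := min (ρ/2) (|(F z).im| / (2*M)) with hσ
      have hσ0 : 0 < σ := by positivity
      have hvmem : F z + (σ:ℂ) ∈ ball (F z) ρ := by
        rw [mem_ball, Complex.dist_eq]
        have : F z + (σ:ℂ) - F z = (σ:ℂ) := by ring
        rw [this, Complex.norm_real, Real.norm_eq_abs, abs_of_pos hσ0]
        have := min_le_left (ρ/2) (|(F z).im| / (2*M))
        linarith
      obtain ⟨w, ⟨hwmem, hwδ⟩, hFw⟩ := hball hvmem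
      have hrew : (F w).re = σ := by rw [hFw]; simp [hre]
      have himw : (F w).im = (F z).im := by rw [hFw]; simp
      have hb := hbound w hwmem hwδ (by rw [hrew]; exact hσ0.ne')
      rw [hrew, himw, abs_of_pos hσ0] at hb
      have hσle : σ ≤ |(F z).im| / (2*M) := min_le_right _ _
      have : M * σ ≤ |(F z).im| / 2 := by
        calc M * σ ≤ M * (|(F z).im| / (2*M)) := mul_le_mul_of_nonneg_left hσle hM.le
        _ = |(F z).im| / 2 := by field_simp
      linarith
  -- find a point I*r close to 0 where F does not vanish
  have hrex : ∃ y : ℝ, 0 < y ∧ y < δ/2 ∧ F (Complex.I * y) ≠ 0 := by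
    by_contra h
    push_neg at h
    have hmemc : Complex.I * ((δ/4 : ℝ):ℂ) ∈ upperHalfDisc :=
      mem_uhd_I_mul (by positivity) (by linarith)
    have hfreq : ∃ᶠ w in nhdsWithin (Complex.I * ((δ/4 : ℝ):ℂ)) {Complex.I * ((δ/4 : ℝ):ℂ)}ᶜ,
        F w = 0 := by
      have hseq : Filter.Tendsto (fun n : ℕ => Complex.I * ((δ/4 + δ/(8*((n:ℝ)+1)) : ℝ):ℂ))
          atTop (nhdsWithin (Complex.I * ((δ/4 : ℝ):ℂ)) {Complex.I * ((δ/4 : ℝ):ℂ)}ᶜ) := by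
        apply tendsto_nhdsWithin_of_tendsto_nhds_of_eventually_within
        · have h8 : Filter.Tendsto (fun n : ℕ => δ/(8*((n:ℝ)+1))) atTop (nhds 0) := by
            have := tendsto_one_div_add_atTop_nhds_zero_nat.const_mul (δ/8)
            simp only [mul_zero] at this
            convert this using 2 with n
            field_simp
          have hre : Filter.Tendsto (fun n : ℕ => δ/4 + δ/(8*((n:ℝ)+1))) atTop (nhds (δ/4)) := by
            have := h8.const_add (δ/4)
            simpa using this
          have hcast : Filter.Tendsto (fun n : ℕ => ((δ/4 + δ/(8*((n:ℝ)+1)) : ℝ):ℂ)) atTop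
              (nhds ((δ/4 : ℝ):ℂ)) := (Complex.continuous_ofReal.tendsto _).comp hre
          exact tendsto_const_nhds.mul hcast
        · apply Filter.Eventually.of_forall
          intro n
          simp only [Set.mem_compl_iff, Set.mem_singleton_iff]
          intro heq
          have h0 : ((δ/4 + δ/(8*((n:ℝ)+1)) : ℝ):ℂ) = ((δ/4 : ℝ):ℂ) :=
            mul_left_cancel₀ Complex.I_ne_zero heq
          have h1 : δ/4 + δ/(8*((n:ℝ)+1)) = δ/4 := by exact_mod_cast h0
          have : δ/(8*((n:ℝ)+1)) = 0 := by linarith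
          have hpos : 0 < δ/(8*((n:ℝ)+1)) := by positivity
          linarith
      apply hseq.frequently
      apply Filter.Frequently.of_forall
      intro n
      apply h
      · positivity
      · have h1 : δ/(8*((n:ℝ)+1)) ≤ δ/8 := by
          apply div_le_div_of_nonneg_left hδ.le (by norm_num)
          have : (0:ℝ) ≤ (n:ℝ) := Nat.cast_nonneg n
          linarith
        linarith
    have hEq := hanal.eqOn_zero_of_preconnected_of_frequently_eq_zero hpre hmemc hfreq
    exact hz₁ (hEq hz₁mem)
  obtain ⟨r, hr0, hrδ2, hFr⟩ := hrex
  -- setup for the core argument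
  obtain ⟨C₄, hC₄, δ₄, hδ₄, hv4⟩ := hvanish 4
  set zc := Complex.I * ((r:ℝ):ℂ) with hzc
  clear_value zc
  have hball_sub : ∀ w ∈ ball zc r, w ∈ upperHalfDisc ∧ ‖w‖ < δ := by
    intro w hw
    rw [mem_ball, Complex.dist_eq] at hw
    have him : |w.im - r| ≤ ‖w - zc‖ := by
      have h0 := Complex.abs_im_le_norm (w - zc)
      have h1 : (w - zc).im = w.im - r := by simp [hzc]
      rwa [h1] at h0
    have himpos : 0 < w.im := by
      have := abs_lt.mp (lt_of_le_of_lt him hw)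
      linarith [this.1]
    have habsw : ‖w‖ < 2*r := by
      calc ‖w‖ = ‖(w - zc) + zc‖ := by ring_nf
      _ ≤ ‖w - zc‖ + ‖zc‖ := norm_add_le _ _
      _ < r + r := by
          have h2 : ‖zc‖ = r := by
            rw [hzc, abs_I_mul_real, abs_of_pos hr0]
          rw [h2]; linarith
      _ = 2*r := by ring
    have h2rδ : 2*r < δ := by linarith
    refine ⟨⟨lt_of_lt_of_le (lt_trans habsw h2rδ) hδ1, himpos⟩, lt_trans habsw h2rδ⟩
  set g₀ := (‖F zc‖)^2 with hg₀def
  have hg₀ : 0 < g₀ := by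
    have := norm_pos_iff.mpr hFr
    rw [hg₀def]
    positivity
  clear_value g₀
  set A := Real.exp (-4⁻¹ * Real.log (g₀/2)) with hA_def
  set B := Real.exp (-4⁻¹ * Real.log (2*C₄^2)) with hB_def
  have hApos : 0 < A := by rw [hA_def]; exact Real.exp_pos _
  have hBpos : 0 < B := by rw [hB_def]; exact Real.exp_pos _
  clear_value A B
  -- key estimate
  have hkey : ∀ y : ℝ, 0 < y → y < r → y < δ₄ → B ≤ 4 * A * r * y := by
    intro y hy0 hyr hyδ4
    set ε := min (C₄^2 * y^8) (g₀/2) with hε_def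
    have hε0 : 0 < ε := by positivity
    have hε1 : ε ≤ C₄^2 * y^8 := min_le_left _ _
    have hε2 : ε ≤ g₀/2 := min_le_right _ _
    clear_value ε
    set H : ℂ → ℂ := fun w => (F w)^2 + ((ε:ℝ):ℂ) with hH_def
    have hHeq : ∀ w, H w = (F w)^2 + ((ε:ℝ):ℂ) := fun w => rfl
    clear_value H
    have hHslit : ∀ w ∈ ball zc r, H w ∈ Complex.slitPlane := by
      intro w hw
      obtain ⟨hwmem, hwδ⟩ := hball_sub w hw
      rw [Complex.mem_slitPlane_iff]
      have hHw : H w = F w * F w + ((ε:ℝ):ℂ) := by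
        rw [hHeq w]; ring
      have hre2 : (H w).re = (F w).re * (F w).re - (F w).im * (F w).im + ε := by
        rw [hHw]; simp [Complex.add_re, Complex.mul_re, Complex.ofReal_re]
      have him2 : (H w).im = (F w).re * (F w).im + (F w).im * (F w).re := by
        rw [hHw]; simp [Complex.add_im, Complex.mul_im, Complex.ofReal_im]
      by_cases hb : (F w).im = 0
      · left; rw [hre2, hb]; nlinarith [mul_self_nonneg (F w).re]
      · by_cases ha : (F w).re = 0
        · exact absurd (hslit0 w hwmem hwδ ha) hb
        · right; rw [him2]
          intro hcontra
          exact (mul_ne_zero ha hb) (by linarith)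
    have hHne : ∀ w ∈ ball zc r, H w ≠ 0 := fun w hw =>
      Complex.slitPlane_ne_zero (hHslit w hw)
    set S : ℂ → ℂ := fun w => Complex.exp (((-4⁻¹ : ℝ):ℂ) * Complex.log (H w)) with hS_def
    have hSeq : ∀ w, S w = Complex.exp (((-4⁻¹ : ℝ):ℂ) * Complex.log (H w)) := fun w => rfl
    clear_value S
    have hFdball : DifferentiableOn ℂ F (ball zc r) :=
      hF_hol.mono (fun w hw => (hball_sub w hw).1)
    have hHd : DifferentiableOn ℂ H (ball zc r) := by
      rw [hH_def]; exact (hFdball.pow 2).add_const _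
    have hlogd : DifferentiableOn ℂ (fun w => Complex.log (H w)) (ball zc r) :=
      hHd.clog hHslit
    have hSd : DifferentiableOn ℂ S (ball zc r) := by
      rw [hS_def]; exact (hlogd.const_mul _).cexp
    have hSabs : ∀ w, ‖S w‖ =
        Real.exp (-4⁻¹ * Real.log (‖H w‖)) := by
      intro w
      rw [hSeq w, Complex.norm_exp, Complex.re_ofReal_mul, Complex.log_re]
    have hSre : ∀ w ∈ ball zc r,
        Real.exp (-4⁻¹ * Real.log (‖H w‖)) * (1/2) ≤ (S w).re ∧ 0 < (S w).re := by
      intro w hw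
      have harg : |(-4⁻¹ : ℝ) * (H w).arg| ≤ Real.pi/4 := by
        rw [abs_mul, show |(-4⁻¹ : ℝ)| = 4⁻¹ by norm_num]
        have := Complex.abs_arg_le_pi (H w)
        linarith
      have hcos : 1/2 ≤ Real.cos ((-4⁻¹ : ℝ) * (H w).arg) := by
        rw [← Real.cos_abs]
        have h1 : Real.cos (Real.pi/4) ≤ Real.cos |(-4⁻¹ : ℝ) * (H w).arg| :=
          Real.cos_le_cos_of_nonneg_of_le_pi (abs_nonneg _) (by linarith [Real.pi_pos]) harg
        have h2 : (1:ℝ)/2 ≤ Real.cos (Real.pi/4) := by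
          rw [Real.cos_pi_div_four]
          have h3 : (1:ℝ) ≤ Real.sqrt 2 := by
            rw [show (1:ℝ) = Real.sqrt 1 from (Real.sqrt_one).symm]
            exact Real.sqrt_le_sqrt (by norm_num)
          linarith
        linarith
      have hSw : (S w).re = Real.exp (-4⁻¹ * Real.log (‖H w‖)) *
          Real.cos ((-4⁻¹ : ℝ) * (H w).arg) := by
        rw [hSeq w, Complex.exp_re, Complex.re_ofReal_mul, Complex.im_ofReal_mul,
          Complex.log_re, Complex.log_im]
      constructor
      · rw [hSw]
        exact mul_le_mul_of_nonneg_left hcos (Real.exp_pos _).le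
      · rw [hSw]
        exact mul_pos (Real.exp_pos _) (by linarith)
    have hpos : ∀ w ∈ ball zc r, 0 < (S w).re := fun w hw => (hSre w hw).2
    set zy := Complex.I * ((y:ℝ):ℂ) with hzy
    clear_value zy
    have hdist : dist zy zc = r - y := by
      rw [Complex.dist_eq, hzy, hzc]
      have h1 : Complex.I * ((y:ℝ):ℂ) - Complex.I * ((r:ℝ):ℂ)
          = Complex.I * (((y - r : ℝ)):ℂ) := by push_cast; ring
      rw [h1, abs_I_mul_real, abs_of_neg (show y - r < 0 by linarith)]
      ring
    have hzymem : zy ∈ ball zc r := by rw [mem_ball, hdist]; linarith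
    have hzyuhd := (hball_sub zy hzymem).1
    have hherg := herglotz_bound hSd hpos hzymem
    rw [hdist] at hherg
    have hherg2 : ‖S zy‖ * y ≤ 2 * ‖S zc‖ * r := by
      have hyy : r - (r - y) = y := by ring
      rwa [hyy] at hherg
    -- upper bound at the center
    have hzcmem : zc ∈ ball zc r := mem_ball_self hr0
    have hHzc_lb : g₀/2 ≤ ‖H zc‖ := by
      have h1 : ‖(F zc)^2‖ = g₀ := by rw [norm_pow, hg₀def]
      have hHzc : (F zc)^2 = H zc - ((ε:ℝ):ℂ) := by
        rw [hHeq zc]; ring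
      have h2 : ‖(F zc)^2‖ ≤ ‖H zc‖ + ε := by
        rw [hHzc]
        calc ‖H zc - ((ε:ℝ):ℂ)‖
            ≤ ‖H zc‖ + ‖((ε:ℝ):ℂ)‖ := by
              simpa [sub_eq_add_neg] using norm_add_le (H zc) (-((ε:ℝ):ℂ))
        _ = ‖H zc‖ + ε := by rw [Complex.norm_real, Real.norm_eq_abs, abs_of_pos hε0]
      rw [h1] at h2
      linarith
    have hSzc : ‖S zc‖ ≤ A := by
      rw [hSabs, hA_def]
      apply Real.exp_le_exp.mpr
      have hlog : Real.log (g₀/2) ≤ Real.log (‖H zc‖) :=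
        Real.log_le_log (by positivity) hHzc_lb
      linarith
    -- lower bound at zy
    have hzy_abs : ‖zy‖ = y := by rw [hzy, abs_I_mul_real, abs_of_pos hy0]
    have hFzy : ‖F zy‖ ≤ C₄ * y^4 := by
      have h := hv4 zy hzyuhd (by rw [hzy_abs]; exact hyδ4)
      rwa [hzy_abs] at h
    have hHzy_ub : ‖H zy‖ ≤ 2 * C₄^2 * y^8 := by
      have h1 : ‖(F zy)^2‖ ≤ C₄^2 * y^8 := by
        rw [norm_pow]
        calc (‖F zy‖)^2 ≤ (C₄ * y^4)^2 :=
              pow_le_pow_left₀ (norm_nonneg _) hFzy 2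
        _ = C₄^2 * y^8 := by ring
      have hHzyw : H zy = (F zy)^2 + ((ε:ℝ):ℂ) := hHeq zy
      calc ‖H zy‖ ≤ ‖(F zy)^2‖ + ‖((ε:ℝ):ℂ)‖ := by
            rw [hHzyw]; exact norm_add_le _ _
      _ = ‖(F zy)^2‖ + ε := by rw [Complex.norm_real, Real.norm_eq_abs, abs_of_pos hε0]
      _ ≤ C₄^2 * y^8 + C₄^2*y^8 := by linarith
      _ = 2 * C₄^2 * y^8 := by ring
    have hHzy_pos : 0 < ‖H zy‖ := norm_pos_iff.mpr (hHne zy hzymem)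
    have hlog2 : Real.log (‖H zy‖) ≤ Real.log (2*C₄^2*y^8) :=
      Real.log_le_log hHzy_pos hHzy_ub
    have hsplit : Real.log (2*C₄^2*y^8) = Real.log (2*C₄^2) + 8 * Real.log y := by
      rw [Real.log_mul (by positivity) (by positivity), Real.log_pow]
      norm_num
    have hy2 : Real.exp ((-2 : ℝ) * Real.log y) = 1/y^2 := by
      have h1 : Real.exp (2 * Real.log y) = y^2 := by
        rw [two_mul, Real.exp_add, Real.exp_log hy0]; ring
      rw [show (-2:ℝ) * Real.log y = -(2 * Real.log y) by ring, Real.exp_neg, h1, one_div]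
    have hlower : B * (1/y^2) ≤ Real.exp (-4⁻¹ * Real.log (‖H zy‖)) := by
      have h1 : -4⁻¹ * Real.log (2*C₄^2*y^8) ≤ -4⁻¹ * Real.log (‖H zy‖) := by
        linarith
      calc B * (1/y^2)
          = Real.exp (-4⁻¹ * Real.log (2*C₄^2)) * Real.exp ((-2 : ℝ) * Real.log y) := by
            rw [hB_def, hy2]
      _ = Real.exp (-4⁻¹ * Real.log (2*C₄^2) + (-2 : ℝ) * Real.log y) := by
            rw [← Real.exp_add]
      _ = Real.exp (-4⁻¹ * Real.log (2*C₄^2*y^8)) := by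
            rw [hsplit]; congr 1; ring
      _ ≤ _ := Real.exp_le_exp.mpr h1
    have hre_le_abs : (S zy).re ≤ ‖S zy‖ := Complex.re_le_norm _
    have hfinal1 : B * (1/y^2) * (1/2) ≤ ‖S zy‖ := by
      have h1 := (hSre zy hzymem).1
      have h2 : B * (1/y^2) * (1/2) ≤
          Real.exp (-4⁻¹ * Real.log (‖H zy‖)) * (1/2) := by linarith
      linarith
    have hchain : B * (1/y^2) * (1/2) * y ≤ 2 * A * r := by
      calc B * (1/y^2) * (1/2) * y ≤ ‖S zy‖ * y :=
            mul_le_mul_of_nonneg_right hfinal1 hy0.le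
      _ ≤ 2 * ‖S zc‖ * r := hherg2
      _ ≤ 2 * A * r := by
            have h9 : 0 ≤ r := hr0.le
            nlinarith [hSzc, norm_nonneg (S zc)]
    have hform : B * (1/y^2) * (1/2) * y = B / (2*y) := by field_simp
    rw [hform, div_le_iff₀ (by positivity)] at hchain
    have hend : 2 * A * r * (2 * y) = 4 * A * r * y := by ring
    linarith [hend ▸ hchain]
  -- conclude
  have hyfin : False := by
    set y := min (min (r/2) (δ₄/2)) (B/(8*A*r)) with hy_def
    have hy0 : 0 < y := by positivity
    have hyr : y < r := by
      calc y ≤ r/2 := le_trans (min_le_left _ _) (min_le_left _ _)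
      _ < r := by linarith
    have hyδ : y < δ₄ := by
      calc y ≤ δ₄/2 := le_trans (min_le_left _ _) (min_le_right _ _)
      _ < δ₄ := by linarith
    have h1 := hkey y hy0 hyr hyδ
    have h2 : y ≤ B/(8*A*r) := min_le_right _ _
    have h3 : 4 * A * r * y ≤ 4 * A * r * (B/(8*A*r)) := by
      apply mul_le_mul_of_nonneg_left h2
      positivity
    have h4 : 4 * A * r * (B/(8*A*r)) = B/2 := by field_simp; ring
    rw [h4] at h3
    linarith
  exact hyfin
end

section
/- Let Ω ⊆ ℂ be a nonempty connected open set, let F be holomorphic on Ω and not identically zero, let B̂ ⊆ Ω be a nonempty open set, and let K > 0 be a constant such that |Im F(p)| ≤ K·|Re F(p)| for all p ∈ B̂. Then F(p) ≠ 0 for every p ∈ B̂. -/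
/-- **Equation (2.7) in the proof of Lemma 2.4.**  If `F` is holomorphic and not identically
zero on a nonempty connected open set `Ω ⊆ ℂ`, and `|Im F| ≤ K |Re F|` on a nonempty open
subset `B̂ ⊆ Ω` for some `K > 0`, then `F` has no zero in `B̂`. -/
theorem holomorphic_into_cone_nonvanishing
    (Ω : Set ℂ) (hΩ_ne : Ω.Nonempty) (hΩ_conn : IsConnected Ω) (hΩ_open : IsOpen Ω)
    (F : ℂ → ℂ) (hF_hol : DifferentiableOn ℂ F Ω)
    (hF_ne : ¬ (∀ z ∈ Ω, F z = 0))
    (Bhat : Set ℂ) (hB_ne : Bhat.Nonempty) (hB_open : IsOpen Bhat) (hB_sub : Bhat ⊆ Ω)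
    (K : ℝ) (hK : 0 < K)
    (hcone : ∀ p ∈ Bhat, |(F p).im| ≤ K * |(F p).re|) :
    ∀ p ∈ Bhat, F p ≠ 0 := by
  intro p hp hFp
  have hA : AnalyticOnNhd ℂ F Ω := hF_hol.analyticOnNhd hΩ_open
  rcases hA.is_constant_or_isOpen hΩ_conn.isPreconnected with ⟨v, hv⟩ | hopen
  · -- constant case: v = F p = 0, so F ≡ 0, contradiction
    apply hF_ne
    intro z hz
    rw [hv z hz, ← hv p (hB_sub hp), hFp]
  · -- open mapping case
    have himg : IsOpen (F '' Bhat) := hopen Bhat hB_sub hB_open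
    have h0 : (0 : ℂ) ∈ F '' Bhat := ⟨p, hp, hFp⟩
    rcases Metric.isOpen_iff.1 himg 0 h0 with ⟨ε, hε, hball⟩
    have hz : (⟨0, ε / 2⟩ : ℂ) ∈ Metric.ball (0 : ℂ) ε := by
      simp only [Metric.mem_ball, dist_zero_right]
      rw [Complex.norm_def, Complex.normSq_mk]
      have : Real.sqrt (0 * 0 + ε / 2 * (ε / 2)) = ε / 2 := by
        rw [show (0 : ℝ) * 0 + ε / 2 * (ε / 2) = (ε / 2) ^ 2 by ring,
          Real.sqrt_sq (by linarith)]
      rw [this]; linarith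
    rcases hball hz with ⟨q, hq, hFq⟩
    have := hcone q hq
    rw [hFq] at this
    have h1 : ((⟨0, ε / 2⟩ : ℂ)).im = ε / 2 := rfl
    have h2 : ((⟨0, ε / 2⟩ : ℂ)).re = 0 := rfl
    rw [h1, h2, abs_of_pos (by linarith : (0:ℝ) < ε / 2)] at this
    simp at this
    linarith
end
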